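/- (Karlin–Novikoff criterion) Suppose Z and Y are integrable random variables with E[Z] ≤ E[Y] < ∞, and the c.d.f. of Z up-crosses the c.d.f. of Y, i.e., there exists z₀ such that F_Z(x) ≤ F_Y(x) for x < z₀ and F_Z(x) ≥ F_Y(x) for x ≥ z₀. Then Z is smaller than Y in stop-loss order: E[(Z−d)₊] ≤ E[(Y−d)₊] for all real d. -/

import Mathlib

open MeasureTheory ProbabilityTheory Set

lemma aux_intble {Ω : Type*} [MeasurableSpace Ω] {μ : Measure Ω} [IsFiniteMeasure μ]
    {X : Ω → ℝ} (hXint : Integrable X μ) (d : ℝ) :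
    Integrable (fun ω => max (X ω - d) 0) μ :=
  (hXint.sub (integrable_const d)).pos_part

lemma aux_lt {Ω : Type*} [MeasurableSpace Ω] (μ : Measure Ω) [IsProbabilityMeasure μ]
    {X : Ω → ℝ} (hXint : Integrable X μ) (d : ℝ) :
    ∫⁻ t in Set.Ioi 0, μ {ω | d + t < X ω} ≠ ⊤ ∧
    ∫ ω, max (X ω - d) 0 ∂μ = (∫⁻ t in Set.Ioi 0, μ {ω | d + t < X ω}).toReal := by
  have hi := aux_intble hXint d
  have hnn : 0 ≤ᵐ[μ] fun ω => max (X ω - d) 0 :=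
    Filter.Eventually.of_forall fun ω => le_max_right _ _
  have key := lintegral_eq_lintegral_meas_lt μ hnn hi.aemeasurable
  have hcongr : ∫⁻ t in Set.Ioi 0, μ {ω | t < max (X ω - d) 0}
      = ∫⁻ t in Set.Ioi 0, μ {ω | d + t < X ω} := by
    apply setLIntegral_congr_fun measurableSet_Ioi
    intro t ht
    dsimp only
    congr 1
    ext ω
    simp only [Set.mem_setOf_eq, lt_max_iff]
    constructor
    · rintro (h | h)
      · linarith
      · exact absurd ht (by simp; linarith)
    · intro h; left; linarith
  rw [hcongr] at key
  constructor
  · rw [← key]; exact hi.lintegral_lt_top.ne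
  · rw [integral_eq_lintegral_of_nonneg_ae hnn hi.aestronglyMeasurable, key]

lemma aux_le {Ω : Type*} [MeasurableSpace Ω] (μ : Measure Ω) [IsProbabilityMeasure μ]
    {X : Ω → ℝ} (hXint : Integrable X μ) (d : ℝ) :
    ∫⁻ t in Set.Ioi 0, μ {ω | X ω ≤ d - t} ≠ ⊤ ∧
    ∫ ω, max (d - X ω) 0 ∂μ = (∫⁻ t in Set.Ioi 0, μ {ω | X ω ≤ d - t}).toReal := by
  have hi : Integrable (fun ω => max (d - X ω) 0) μ :=
    ((integrable_const d).sub hXint).pos_part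
  have hnn : 0 ≤ᵐ[μ] fun ω => max (d - X ω) 0 :=
    Filter.Eventually.of_forall fun ω => le_max_right _ _
  have key := lintegral_eq_lintegral_meas_le μ hnn hi.aemeasurable
  have hcongr : ∫⁻ t in Set.Ioi 0, μ {ω | t ≤ max (d - X ω) 0}
      = ∫⁻ t in Set.Ioi 0, μ {ω | X ω ≤ d - t} := by
    apply setLIntegral_congr_fun measurableSet_Ioi
    intro t ht
    dsimp only
    simp only [Set.mem_Ioi] at ht
    congr 1
    ext ω
    simp only [Set.mem_setOf_eq, le_max_iff]
    constructor
    · rintro (h | h)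
      · linarith
      · linarith
    · intro h; left; linarith
  rw [hcongr] at key
  constructor
  · rw [← key]; exact hi.lintegral_lt_top.ne
  · rw [integral_eq_lintegral_of_nonneg_ae hnn hi.aestronglyMeasurable, key]

theorem stmt3 {Ω : Type*} [MeasurableSpace Ω] (μ : Measure Ω) [IsProbabilityMeasure μ]
    (Z Y : Ω → ℝ) (hZmeas : Measurable Z) (hYmeas : Measurable Y)
    (hZint : Integrable Z μ) (hYint : Integrable Y μ)
    (hmean : ∫ ω, Z ω ∂μ ≤ ∫ ω, Y ω ∂μ)
    (hcross : ∃ z₀ : ℝ,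
      (∀ x < z₀, (μ {ω | Z ω ≤ x}).toReal ≤ (μ {ω | Y ω ≤ x}).toReal) ∧
      (∀ x ≥ z₀, (μ {ω | Z ω ≤ x}).toReal ≥ (μ {ω | Y ω ≤ x}).toReal)) :
    ∀ d : ℝ, ∫ ω, max (Z ω - d) 0 ∂μ ≤ ∫ ω, max (Y ω - d) 0 ∂μ := by
  obtain ⟨z₀, hlow, hhigh⟩ := hcross
  -- convert toReal inequalities to ENNReal inequalities
  have toE : ∀ {s t : Set Ω}, (μ s).toReal ≤ (μ t).toReal → μ s ≤ μ t := by
    intro s t h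
    exact (ENNReal.toReal_le_toReal (measure_ne_top μ s) (measure_ne_top μ t)).mp h
  intro d
  rcases le_or_gt z₀ d with hd | hd
  · -- case d ≥ z₀ : compare tail probabilities directly
    obtain ⟨hZfin, hZeq⟩ := aux_lt μ hZint d
    obtain ⟨hYfin, hYeq⟩ := aux_lt μ hYint d
    rw [hZeq, hYeq]
    apply (ENNReal.toReal_le_toReal hZfin hYfin).mpr
    · apply lintegral_mono_ae
      rw [ae_restrict_iff' measurableSet_Ioi]
      apply Filter.Eventually.of_forall
      intro t ht
      simp only [Set.mem_Ioi] at ht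
      -- μ {d+t < Z} ≤ μ {d+t < Y}
      have hle : μ {ω | Y ω ≤ d + t} ≤ μ {ω | Z ω ≤ d + t} :=
        toE (hhigh (d + t) (by linarith))
      have hZc : μ {ω | d + t < Z ω} = 1 - μ {ω | Z ω ≤ d + t} := by
        have hs : {ω | d + t < Z ω} = {ω | Z ω ≤ d + t}ᶜ := by ext ω; simp [not_le]
        rw [hs, measure_compl (s := {ω | Z ω ≤ d + t}) (hZmeas measurableSet_Iic) (measure_ne_top _ _), measure_univ]
      have hYc : μ {ω | d + t < Y ω} = 1 - μ {ω | Y ω ≤ d + t} := by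
        have hs : {ω | d + t < Y ω} = {ω | Y ω ≤ d + t}ᶜ := by ext ω; simp [not_le]
        rw [hs, measure_compl (s := {ω | Y ω ≤ d + t}) (hYmeas measurableSet_Iic) (measure_ne_top _ _), measure_univ]
      rw [hZc, hYc]
      exact tsub_le_tsub_left hle 1
  · -- case d < z₀ : use max(x-d,0) = (x-d) + max(d-x,0)
    have hsplit : ∀ (X : Ω → ℝ), Integrable X μ →
        ∫ ω, max (X ω - d) 0 ∂μ = (∫ ω, X ω ∂μ - d) + ∫ ω, max (d - X ω) 0 ∂μ := by
      intro X hX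
      have : ∫ ω, max (X ω - d) 0 ∂μ
          = ∫ ω, ((X ω - d) + max (d - X ω) 0) ∂μ := by
        apply integral_congr_ae
        apply Filter.Eventually.of_forall
        intro ω
        show max (X ω - d) 0 = (X ω - d) + max (d - X ω) 0
        rcases le_total (X ω) d with h | h
        · rw [max_eq_right (by linarith : X ω - d ≤ 0), max_eq_left (by linarith : (0:ℝ) ≤ d - X ω)]
          ring
        · rw [max_eq_left (by linarith : (0:ℝ) ≤ X ω - d), max_eq_right (by linarith : d - X ω ≤ 0)]
          ring
      have h1 : Integrable (fun ω => X ω - d) μ := hX.sub (integrable_const d)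
      have h2 : Integrable (fun ω => max (d - X ω) 0) μ := ((integrable_const d).sub hX).pos_part
      rw [this, integral_add h1 h2, integral_sub hX (integrable_const d), integral_const]
      simp
    rw [hsplit Z hZint, hsplit Y hYint]
    have hle2 : ∫ ω, max (d - Z ω) 0 ∂μ ≤ ∫ ω, max (d - Y ω) 0 ∂μ := by
      obtain ⟨hZfin, hZeq⟩ := aux_le μ hZint d
      obtain ⟨hYfin, hYeq⟩ := aux_le μ hYint d
      rw [hZeq, hYeq]
      apply (ENNReal.toReal_le_toReal hZfin hYfin).mpr
      apply lintegral_mono_ae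
      rw [ae_restrict_iff' measurableSet_Ioi]
      apply Filter.Eventually.of_forall
      intro t ht
      simp only [Set.mem_Ioi] at ht
      exact toE (hlow (d - t) (by linarith))
    linarith
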